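/- Let G be the simple graph on vertex set {a,b,c,d,e} with edge set {{a,b},{b,c},{c,d},{d,e},{e,a},{b,d}}. There exists a linear arrangement of G (not necessarily planar) whose cost is strictly smaller than the cost of every planar linear arrangement of G. In other words, the optimal value of the minimum linear arrangement problem on G is strictly smaller than the optimal value of the planar minimum linear arrangement problem on G. -/

import Mathlib

namespace CounterexampleMinLA

/-- The vertex `a`. -/
def a : Fin 5 := 0
/-- The vertex `b`. -/
def b : Fin 5 := 1
/-- The vertex `c`. -/
def c : Fin 5 := 2
/-- The vertex `d`. -/
def d : Fin 5 := 3
/-- The vertex `e`. -/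
def e : Fin 5 := 4

/-- The edge set of the graph `G`: the 5-cycle a-b-c-d-e-a together with the chord {b,d}. -/
def edges : Finset (Sym2 (Fin 5)) := {s(a,b), s(b,c), s(c,d), s(d,e), s(e,a), s(b,d)}

/-- The edges of the 5-cycle a-b-c-d-e-a. -/
def cycleEdges : Finset (Sym2 (Fin 5)) := {s(a,b), s(b,c), s(c,d), s(d,e), s(e,a)}

/-- A linear arrangement: a bijection from the vertices onto the positions {1,…,5}. -/
def IsArrangement (π : Fin 5 → ℕ) : Prop :=
  Set.BijOn π Set.univ (Set.Icc 1 5)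

/-- The cost of an arrangement: the sum over all edges {u,v} of |π(u) − π(v)|. -/
def cost (π : Fin 5 → ℕ) : ℤ :=
  ∑ ed ∈ edges,
    Sym2.lift ⟨fun u v => |(π u : ℤ) - (π v : ℤ)|, fun u v => abs_sub_comm _ _⟩ ed

/-- Two distinct edges cross in `π` if their endpoints can be labelled `{u,v}`, `{x,y}`
with `π u < π x < π v < π y`. -/
def Cross (π : Fin 5 → ℕ) (e₁ e₂ : Sym2 (Fin 5)) : Prop :=
  e₁ ≠ e₂ ∧ ∃ u v x y, e₁ = s(u, v) ∧ e₂ = s(x, y) ∧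
    π u < π x ∧ π x < π v ∧ π v < π y

/-- An arrangement is planar if no two edges of the graph cross in it. -/
def IsPlanar (π : Fin 5 → ℕ) : Prop :=
  ∀ e₁ ∈ edges, ∀ e₂ ∈ edges, ¬ Cross π e₁ e₂

/-- `e₁` dominates `e₂` in `π` if they are distinct and their endpoints can be labelled
`e₁ = {x,y}`, `e₂ = {u,v}` with `π u ≤ π x < π y ≤ π v`. -/
def Dominates (π : Fin 5 → ℕ) (e₁ e₂ : Sym2 (Fin 5)) : Prop :=
  e₁ ≠ e₂ ∧ ∃ x y u v, e₁ = s(x, y) ∧ e₂ = s(u, v) ∧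
    π u ≤ π x ∧ π x < π y ∧ π y ≤ π v


lemma cost_eq (σ : Fin 5 → ℕ) : cost σ =
    |(σ a : ℤ) - σ b| + |(σ b : ℤ) - σ c| + |(σ c : ℤ) - σ d| + |(σ d : ℤ) - σ e|
    + |(σ e : ℤ) - σ a| + |(σ b : ℤ) - σ d| := by
  simp +decide [cost, edges, Finset.sum_insert]
  ring

/-- All orientations of the edges of `G`. -/
def P2 : List (Fin 5 × Fin 5) :=
  [(a,b),(b,c),(c,d),(d,e),(e,a),(b,d),(b,a),(c,b),(d,c),(e,d),(a,e),(d,b)]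

set_option maxRecDepth 40000 in
lemma key : ∀ g : Equiv.Perm (Fin 5),
    (∀ p ∈ P2, ∀ q ∈ P2, ¬((g p.1).val < (g q.1).val ∧ (g q.1).val < (g p.2).val ∧
      (g p.2).val < (g q.2).val)) →
    10 ≤ (((g a : ℕ) : ℤ) - ((g b : ℕ) : ℤ)).natAbs + (((g b : ℕ) : ℤ) - ((g c : ℕ) : ℤ)).natAbs
      + (((g c : ℕ) : ℤ) - ((g d : ℕ) : ℤ)).natAbs + (((g d : ℕ) : ℤ) - ((g e : ℕ) : ℤ)).natAbs
      + (((g e : ℕ) : ℤ) - ((g a : ℕ) : ℤ)).natAbs + (((g b : ℕ) : ℤ) - ((g d : ℕ) : ℤ)).natAbs := by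
  decide

lemma cross_of (σ : Fin 5 → ℕ) (u v x y : Fin 5) (h1 : σ u < σ x) (h2 : σ x < σ v)
    (h3 : σ v < σ y) : Cross σ s(u,v) s(x,y) := by
  refine ⟨?_, u, v, x, y, rfl, rfl, h1, h2, h3⟩
  intro h
  rw [Sym2.eq_iff] at h
  rcases h with ⟨rfl, rfl⟩ | ⟨rfl, rfl⟩ <;> omega

lemma mem_edges : ∀ p ∈ P2, s(p.1, p.2) ∈ edges := by decide

/-- There is a linear arrangement of `G` whose cost is strictly smaller than the cost of
every planar linear arrangement of `G`: the minimum linear arrangement of `G` is strictly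
cheaper than the minimum planar linear arrangement of `G`. -/
theorem exists_arrangement_cheaper_than_every_planar :
    ∃ π : Fin 5 → ℕ, IsArrangement π ∧
      ∀ σ : Fin 5 → ℕ, IsArrangement σ → IsPlanar σ → cost π < cost σ := by
  refine ⟨![1, 3, 5, 4, 2], ⟨?_, ?_, ?_⟩, ?_⟩
  · intro v _
    fin_cases v <;> simp [Set.mem_Icc]
  · intro u _ v _ h
    fin_cases u <;> fin_cases v <;> simp_all
  · intro n hn
    simp only [Set.mem_Icc] at hn
    obtain ⟨hn1, hn2⟩ := hn
    interval_cases n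
    · exact ⟨0, Set.mem_univ _, rfl⟩
    · exact ⟨4, Set.mem_univ _, rfl⟩
    · exact ⟨1, Set.mem_univ _, rfl⟩
    · exact ⟨3, Set.mem_univ _, rfl⟩
    · exact ⟨2, Set.mem_univ _, rfl⟩
  · intro σ hσ hpl
    have hbd : ∀ v : Fin 5, 1 ≤ σ v ∧ σ v ≤ 5 := by
      intro v
      have := hσ.mapsTo (Set.mem_univ v)
      simpa [Set.mem_Icc] using this
    set f : Fin 5 → Fin 5 := fun v => ⟨σ v - 1, by have := hbd v; omega⟩ with hf
    have hfv : ∀ v, σ v = (f v : ℕ) + 1 := by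
      intro v; have := hbd v; simp [hf]; omega
    have hinj : Function.Injective f := by
      intro u v h
      apply hσ.injOn (Set.mem_univ u) (Set.mem_univ v)
      have := congrArg Fin.val h
      simp [hf] at this
      have hu := hbd u; have hv := hbd v
      omega
    have hbij : Function.Bijective f := Finite.injective_iff_bijective.mp hinj
    set g : Equiv.Perm (Fin 5) := Equiv.ofBijective f hbij with hg
    have hgf : ∀ v, g v = f v := fun v => rfl
    have hplF : ∀ p ∈ P2, ∀ q ∈ P2, ¬((g p.1).val < (g q.1).val ∧
        (g q.1).val < (g p.2).val ∧ (g p.2).val < (g q.2).val) := by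
      intro p hp q hq ⟨h1, h2, h3⟩
      have eσ : ∀ v, σ v = (g v : ℕ) + 1 := fun v => hfv v
      refine hpl _ (mem_edges p hp) _ (mem_edges q hq)
        (cross_of σ p.1 p.2 q.1 q.2 ?_ ?_ ?_) <;>
        simp only [eσ] <;> omega
    have hkey := key g hplF
    have hdiff : ∀ u v : Fin 5, (σ u : ℤ) - (σ v : ℤ) = ((g u : ℕ) : ℤ) - ((g v : ℕ) : ℤ) := by
      intro u v
      rw [hfv u, hfv v]
      simp [hgf]
    have hc9 : cost ![1, 3, 5, 4, 2] = 9 := by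
      rw [cost_eq]; simp [a, b, c, d, e]
    have hcσ : cost σ = ((((g a : ℕ) : ℤ) - ((g b : ℕ) : ℤ)).natAbs
        + (((g b : ℕ) : ℤ) - ((g c : ℕ) : ℤ)).natAbs
        + (((g c : ℕ) : ℤ) - ((g d : ℕ) : ℤ)).natAbs
        + (((g d : ℕ) : ℤ) - ((g e : ℕ) : ℤ)).natAbs
        + (((g e : ℕ) : ℤ) - ((g a : ℕ) : ℤ)).natAbs
        + (((g b : ℕ) : ℤ) - ((g d : ℕ) : ℤ)).natAbs : ℕ) := by
      rw [cost_eq, hdiff, hdiff, hdiff, hdiff, hdiff, hdiff]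
      push_cast [Int.natCast_natAbs]
      ring
    rw [hc9, hcσ]
    exact_mod_cast lt_of_lt_of_le (by norm_num) hkey


end CounterexampleMinLA
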